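/- arXiv:math/0701594 — 2 statements merged into one kernel-verified Lean document; each statement's English description precedes it below -/
import Mathlib

section
/- Let n ≥ 1 be an integer, r > 0 and 0 < h ≤ r, and let Q := [−r,r]ⁿ × [0,h] ⊂ ℝ^{n+1}. Let g : Q → ℝ be continuously differentiable. Define A := {y ∈ Q : g(y) ≤ 0}, B := {y ∈ Q : g(y) ≥ 1}, and C := {y ∈ Q : 0 < g(y) < 1}, and let |·| denote (n+1)-dimensional Lebesgue measure. Then there is a constant C₀ depending only on n such that |A| · |B| ≤ C₀ · r^{n+2} · ∫_C |∇g(y)| dy. -/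
open MeasureTheory Set

open scoped ENNReal

/-- The box `Q = [-r,r]^n × [0,h] ⊆ ℝ^{n+1}`. -/
def Qbox (n : ℕ) (r h : ℝ) : Set ((Fin n → ℝ) × ℝ) :=
  (Set.univ.pi fun _ : Fin n => Set.Icc (-r) r) ×ˢ Set.Icc 0 h

lemma crossing_lemma {φ dφ : ℝ → ℝ}
    (hφc : ContinuousOn φ (Icc 0 1))
    (hφd : ∀ t ∈ Icc (0:ℝ) 1, HasDerivWithinAt φ (dφ t) (Icc 0 1) t)
    (hdc : ContinuousOn dφ (Icc 0 1))
    (h0 : φ 0 ≤ 0) (h1 : 1 ≤ φ 1) :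
    ∃ a b : ℝ, 0 ≤ a ∧ a < b ∧ b ≤ 1 ∧ (∀ t ∈ Ioo a b, 0 < φ t ∧ φ t < 1) ∧
      1 ≤ ∫ t in Ioo a b, |dφ t| := by
  have h01 : (0:ℝ) ≤ 1 := zero_le_one
  -- the first time φ reaches 1
  set S1 : Set ℝ := {t ∈ Icc (0:ℝ) 1 | 1 ≤ φ t} with hS1def
  have hS1closed : IsClosed S1 := by
    have := hφc.preimage_isClosed_of_isClosed isClosed_Icc (isClosed_Ici (a := (1:ℝ)))
    exact this
  have hS1ne : S1.Nonempty := ⟨1, ⟨h01, le_rfl⟩, h1⟩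
  have hS1bdd : BddBelow S1 := ⟨0, fun t ht => ht.1.1⟩
  set b := sInf S1 with hbdef
  have hbS1 : b ∈ S1 := hS1closed.csInf_mem hS1ne hS1bdd
  have hb0 : 0 ≤ b := hbS1.1.1
  have hb1 : b ≤ 1 := hbS1.1.2
  have hφb : 1 ≤ φ b := hbS1.2
  -- the last time before b that φ is ≤ 0
  set S0 : Set ℝ := {t ∈ Icc (0:ℝ) b | φ t ≤ 0} with hS0def
  have hS0closed : IsClosed S0 := by
    have := (hφc.mono (Icc_subset_Icc le_rfl hb1)).preimage_isClosed_of_isClosed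
      isClosed_Icc (isClosed_Iic (a := (0:ℝ)))
    exact this
  have hS0ne : S0.Nonempty := ⟨0, ⟨le_rfl, hb0⟩, h0⟩
  have hS0bdd : BddAbove S0 := ⟨b, fun t ht => ht.1.2⟩
  set a := sSup S0 with hadef
  have haS0 : a ∈ S0 := hS0closed.csSup_mem hS0ne hS0bdd
  have ha0 : 0 ≤ a := haS0.1.1
  have hab' : a ≤ b := haS0.1.2
  have hφa : φ a ≤ 0 := haS0.2
  have hab : a < b := lt_of_le_of_ne hab' (by
    intro he; rw [he] at hφa; linarith)
  refine ⟨a, b, ha0, hab, hb1, ?_, ?_⟩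
  · intro t ht
    have htI : t ∈ Icc (0:ℝ) 1 := ⟨le_trans ha0 ht.1.le, le_trans ht.2.le hb1⟩
    constructor
    · by_contra hc
      push_neg at hc
      have : t ∈ S0 := ⟨⟨htI.1, ht.2.le⟩, hc⟩
      exact absurd (le_csSup hS0bdd this) (not_le.mpr ht.1)
    · by_contra hc
      push_neg at hc
      have : t ∈ S1 := ⟨htI, hc⟩
      exact absurd (csInf_le hS1bdd this) (not_le.mpr ht.2)
  · -- FTC
    have hsub : Icc a b ⊆ Icc (0:ℝ) 1 := Icc_subset_Icc ha0 hb1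
    have hcont' : ContinuousOn φ (Icc a b) := hφc.mono hsub
    have hderiv' : ∀ t ∈ Ioo a b, HasDerivWithinAt φ (dφ t) (Ioi t) t := by
      intro t ht
      have htI : t ∈ Icc (0:ℝ) 1 := ⟨le_trans ha0 ht.1.le, le_trans ht.2.le hb1⟩
      have ht1 : t < 1 := lt_of_lt_of_le ht.2 hb1
      refine (hφd t htI).mono_of_mem_nhdsWithin ?_
      rw [mem_nhdsWithin]
      refine ⟨Iio 1, isOpen_Iio, ht1, ?_⟩
      rintro s ⟨hs1, hs2⟩
      exact ⟨le_trans htI.1 (le_of_lt hs2), le_of_lt hs1⟩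
    have hint : IntervalIntegrable dφ volume a b := by
      have : ContinuousOn dφ (uIcc a b) := by
        rw [uIcc_of_le hab.le]; exact hdc.mono hsub
      exact this.intervalIntegrable
    have hFTC := intervalIntegral.integral_eq_sub_of_hasDeriv_right_of_le hab.le hcont'
      hderiv' hint
    have h1' : (1:ℝ) ≤ ∫ t in a..b, dφ t := by
      rw [hFTC]; linarith
    have h2' : (∫ t in a..b, dφ t) ≤ ∫ t in a..b, |dφ t| := by
      calc (∫ t in a..b, dφ t) ≤ |∫ t in a..b, dφ t| := le_abs_self _
        _ ≤ ∫ t in a..b, |dφ t| := intervalIntegral.abs_integral_le_integral_abs hab.le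
    have h3' : (∫ t in a..b, |dφ t|) = ∫ t in Ioo a b, |dφ t| := by
      rw [intervalIntegral.integral_of_le hab.le, integral_Ioc_eq_integral_Ioo]
    linarith

lemma scaled_lintegral_le {n : ℕ} (F : ((Fin n → ℝ) × ℝ) → ℝ≥0∞)
    {s : ℝ} (hs : (1:ℝ)/2 ≤ s) (c : (Fin n → ℝ) × ℝ) {S : Set ((Fin n → ℝ) × ℝ)}
    (hS : MeasurableSet S) :
    ∫⁻ w in S, F (s • w + c) ≤ 2 ^ (n+1) * ∫⁻ z, F z := by
  haveI : (volume : Measure ((Fin n → ℝ) × ℝ)).IsAddHaarMeasure := by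
    exact inferInstanceAs (((volume : Measure (Fin n → ℝ)).prod (volume : Measure ℝ)).IsAddHaarMeasure)
  have hspos : (0:ℝ) < s := lt_of_lt_of_le (by norm_num) hs
  set ψ : ((Fin n → ℝ) × ℝ) → ((Fin n → ℝ) × ℝ) := fun w => s • w + c with hψ
  have hfd : ∀ w ∈ S, HasFDerivWithinAt ψ
      (s • ContinuousLinearMap.id ℝ ((Fin n → ℝ) × ℝ)) S w := by
    intro w _
    exact (((hasFDerivAt_id w).const_smul s).add_const c).hasFDerivWithinAt
  have hinj : InjOn ψ S := by
    intro w1 _ w2 _ he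
    have : s • w1 = s • w2 := by
      have := congrArg (fun z => z - c) he
      simpa [hψ] using this
    exact smul_right_injective _ (ne_of_gt hspos) this
  have hdet : (s • ContinuousLinearMap.id ℝ ((Fin n → ℝ) × ℝ)).det = s ^ (n+1) := by
    rw [ContinuousLinearMap.det]
    rw [ContinuousLinearMap.coe_smul, ContinuousLinearMap.coe_id]
    rw [LinearMap.det_smul, LinearMap.det_id, mul_one]
    congr 1
    simp [Module.finrank_prod, Module.finrank_pi]
  have hcv := lintegral_image_eq_lintegral_abs_det_fderiv_mul volume hS hfd hinj F
  rw [hdet] at hcv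
  have habs : |s ^ (n+1)| = s ^ (n+1) := abs_of_pos (pow_pos hspos _)
  have h1 : ENNReal.ofReal (s ^ (n+1)) * ∫⁻ w in S, F (ψ w)
      ≤ ∫⁻ z, F z := by
    rw [← lintegral_const_mul' _ _ ENNReal.ofReal_ne_top]
    have : (∫⁻ w in S, ENNReal.ofReal (s^(n+1)) * F (ψ w)) = ∫⁻ x in ψ '' S, F x := by
      rw [hcv]; congr 1; ext w; rw [habs]
    rw [this]
    exact setLIntegral_le_lintegral _ _
  have hone : (1:ℝ≥0∞) ≤ 2 ^ (n+1) * ENNReal.ofReal (s ^ (n+1)) := by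
    have h2 : (2:ℝ≥0∞) ^ (n+1) = ENNReal.ofReal ((2:ℝ) ^ (n+1)) := by
      rw [ENNReal.ofReal_pow (by norm_num)]
      norm_num
    rw [h2, ← ENNReal.ofReal_mul (by positivity)]
    rw [show (1:ℝ≥0∞) = ENNReal.ofReal 1 by simp]
    apply ENNReal.ofReal_le_ofReal
    calc (1:ℝ) = 1 ^ (n+1) := (one_pow _).symm
      _ ≤ (2*s) ^ (n+1) := by
          apply pow_le_pow_left₀ (by norm_num)
          linarith
      _ = 2 ^ (n+1) * s ^ (n+1) := mul_pow _ _ _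
  calc (∫⁻ w in S, F (s • w + c)) = 1 * ∫⁻ w in S, F (ψ w) := by rw [one_mul]
    _ ≤ (2 ^ (n+1) * ENNReal.ofReal (s ^ (n+1))) * ∫⁻ w in S, F (ψ w) :=
        mul_le_mul_left hone _
    _ = 2 ^ (n+1) * (ENNReal.ofReal (s ^ (n+1)) * ∫⁻ w in S, F (ψ w)) := by ring
    _ ≤ 2 ^ (n+1) * ∫⁻ z, F z := mul_le_mul_right h1 _

/-- Unweighted De Giorgi isoperimetric inequality on a box in `ℝ^{n+1}`
(display (3.14)): `|A| ⬝ |B| ≤ C₀ r^{n+2} ∫_C |∇g|`, with `C₀` depending only on `n`. -/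
theorem deGiorgi_isoperimetric_box (n : ℕ) (hn : 1 ≤ n) :
    ∃ C₀ : ℝ, 0 < C₀ ∧ ∀ (r h : ℝ), 0 < r → 0 < h → h ≤ r →
      ∀ g : (Fin n → ℝ) × ℝ → ℝ, ContDiffOn ℝ 1 g (Qbox n r h) →
        (volume {q ∈ Qbox n r h | g q ≤ 0}).toReal *
            (volume {q ∈ Qbox n r h | 1 ≤ g q}).toReal ≤
          C₀ * r ^ (n + 2) *
            ∫ q in {q ∈ Qbox n r h | 0 < g q ∧ g q < 1},
              ‖fderivWithin ℝ g (Qbox n r h) q‖ := by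
  classical
  refine ⟨4 ^ (n + 2), by positivity, ?_⟩
  intro r h hr hh hhr g hg
  haveI haar : (volume : Measure ((Fin n → ℝ) × ℝ)).IsAddHaarMeasure :=
    inferInstanceAs (((volume : Measure (Fin n → ℝ)).prod (volume : Measure ℝ)).IsAddHaarMeasure)
  set Q : Set ((Fin n → ℝ) × ℝ) := Qbox n r h with hQdef
  set A := {q ∈ Q | g q ≤ 0} with hAdef
  set B := {q ∈ Q | 1 ≤ g q} with hBdef
  set C := {q ∈ Q | 0 < g q ∧ g q < 1} with hCdef
  -- basic properties of the box
  have hQclosed : IsClosed Q :=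
    (isClosed_set_pi fun i _ => isClosed_Icc).prod isClosed_Icc
  have hQcompact : IsCompact Q :=
    (isCompact_univ_pi fun i => isCompact_Icc).prod isCompact_Icc
  have hQconv : Convex ℝ Q :=
    (convex_pi fun i _ => convex_Icc _ _).prod (convex_Icc _ _)
  have hQint : (interior Q).Nonempty := by
    refine ⟨(fun _ => 0, h/2), ?_⟩
    rw [hQdef, Qbox, interior_prod_eq, interior_pi_set finite_univ]
    constructor
    · intro i _
      rw [interior_Icc]
      exact ⟨by linarith, by linarith⟩
    · rw [interior_Icc]
      exact ⟨by linarith, by linarith⟩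
  have hQud : UniqueDiffOn ℝ Q := uniqueDiffOn_convex hQconv hQint
  have hQmeas : MeasurableSet Q := hQclosed.measurableSet
  have hgc : ContinuousOn g Q := hg.continuousOn
  have hDc : ContinuousOn (fun z => fderivWithin ℝ g Q z) Q :=
    hg.continuousOn_fderivWithin hQud le_rfl
  have hNc : ContinuousOn (fun z => ‖fderivWithin ℝ g Q z‖) Q := hDc.norm
  -- the sets A, B, C
  have hAclosed : IsClosed A :=
    hgc.preimage_isClosed_of_isClosed hQclosed isClosed_Iic
  have hBclosed : IsClosed B :=
    hgc.preimage_isClosed_of_isClosed hQclosed isClosed_Ici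
  have hAmeas : MeasurableSet A := hAclosed.measurableSet
  have hBmeas : MeasurableSet B := hBclosed.measurableSet
  have hCeq : C = Q \ (A ∪ B) := by
    ext q
    constructor
    · rintro ⟨hq, h1, h2⟩
      refine ⟨hq, ?_⟩
      rintro (⟨_, h3⟩ | ⟨_, h3⟩) <;> linarith
    · rintro ⟨hq, hno⟩
      rw [mem_union] at hno
      push_neg at hno
      refine ⟨hq, ?_, ?_⟩
      · by_contra hc; push_neg at hc; exact hno.1 ⟨hq, hc⟩
      · by_contra hc; push_neg at hc; exact hno.2 ⟨hq, hc⟩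
  have hCmeas : MeasurableSet C := by
    rw [hCeq]; exact hQmeas.diff (hAclosed.measurableSet.union hBclosed.measurableSet)
  have hCsub : C ⊆ Q := fun q hq => hq.1
  have hAsub : A ⊆ Q := fun q hq => hq.1
  have hBsub : B ⊆ Q := fun q hq => hq.1
  -- Tietze extension of the norm of the derivative
  obtain ⟨H, hH⟩ : ∃ H : C((Fin n → ℝ) × ℝ, ℝ),
      ∀ z ∈ Q, H z = ‖fderivWithin ℝ g Q z‖ := by
    obtain ⟨H, hHr⟩ := ContinuousMap.exists_restrict_eq (Y := ℝ) hQclosed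
      ⟨_, hNc.restrict⟩
    refine ⟨H, fun z hz => ?_⟩
    have := DFunLike.congr_fun hHr (⟨z, hz⟩ : Q)
    simpa using this
  -- the indicator function
  set F : ((Fin n → ℝ) × ℝ) → ℝ := C.indicator (fun z => H z) with hFdef
  set eF : ((Fin n → ℝ) × ℝ) → ℝ≥0∞ := fun z => ENNReal.ofReal (F z) with heFdef
  have hFmeas : Measurable F := H.continuous.measurable.indicator hCmeas
  have heFmeas : Measurable eF := ENNReal.measurable_ofReal.comp hFmeas
  have hFnn : ∀ z, 0 ≤ F z := by
    intro z
    by_cases hz : z ∈ C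
    · rw [hFdef, indicator_of_mem hz, hH z (hCsub hz)]; exact norm_nonneg _
    · rw [hFdef, indicator_of_notMem hz]
  -- uniform bound on the derivative
  obtain ⟨M, hM⟩ := hQcompact.exists_bound_of_continuousOn hNc
  set M' : ℝ := max M 0 with hM'def
  have hM'nn : 0 ≤ M' := le_max_right _ _
  have hFM : ∀ z, F z ≤ M' := by
    intro z
    by_cases hz : z ∈ C
    · rw [hFdef, indicator_of_mem hz, hH z (hCsub hz)]
      refine le_trans ?_ (le_max_left M 0)
      have := hM z (hCsub hz)
      rwa [norm_norm] at this
    · rw [hFdef, indicator_of_notMem hz]; exact hM'nn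
  set J : ℝ≥0∞ := ∫⁻ z, eF z with hJdef
  have hJfin : J ≠ ∞ := by
    have hle : J ≤ ENNReal.ofReal M' * volume Q := by
      rw [hJdef]
      calc (∫⁻ z, eF z) ≤ ∫⁻ z, Q.indicator (fun _ => ENNReal.ofReal M') z := by
            apply lintegral_mono
            intro z
            by_cases hz : z ∈ C
            · rw [indicator_of_mem (hCsub hz)]
              exact ENNReal.ofReal_le_ofReal (hFM z)
            · have : F z = 0 := by rw [hFdef, indicator_of_notMem hz]
              rw [heFdef]
              simp only [this, ENNReal.ofReal_zero]
              exact zero_le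
        _ = ENNReal.ofReal M' * volume Q := by
            rw [lintegral_indicator hQmeas, setLIntegral_const]
    exact ne_top_of_le_ne_top
      (ENNReal.mul_ne_top ENNReal.ofReal_ne_top hQcompact.measure_lt_top.ne) hle
  -- distance bound in the box
  have hyx : ∀ x ∈ Q, ∀ y ∈ Q, ‖y - x‖ ≤ 2 * r := by
    intro x hx y hy
    rw [Prod.norm_def]
    apply max_le
    · rw [Prod.fst_sub]
      apply (pi_norm_le_iff_of_nonneg (by positivity)).2
      intro i
      have h1 : x.1 i ∈ Icc (-r) r := hx.1 i (mem_univ i)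
      have h2 : y.1 i ∈ Icc (-r) r := hy.1 i (mem_univ i)
      rw [Real.norm_eq_abs, Pi.sub_apply, abs_le]
      constructor <;> [linarith [h1.2, h2.1]; linarith [h1.1, h2.2]]
    · rw [Prod.snd_sub, Real.norm_eq_abs, abs_le]
      have h1 := hx.2
      have h2 := hy.2
      constructor <;> [linarith [h1.2, h2.1]; linarith [h1.1, h2.2]]
  -- the key pointwise estimate along segments
  have key : ∀ x ∈ A, ∀ y ∈ B, ENNReal.ofReal ((2*r)⁻¹) ≤
      ∫⁻ t in Ioo (0:ℝ) 1, eF (x + t • (y - x)) := by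
    intro x hx y hy
    have hxQ : x ∈ Q := hx.1
    have hyQ : y ∈ Q := hy.1
    set ℓ : ℝ → ((Fin n → ℝ) × ℝ) := fun t => x + t • (y - x) with hℓdef
    have hℓcont : Continuous ℓ := by
      apply Continuous.add continuous_const
      exact (continuous_id.smul continuous_const)
    have hmem : ∀ t ∈ Icc (0:ℝ) 1, ℓ t ∈ Q := by
      intro t ht
      have hconv := hQconv hxQ hyQ (a := 1 - t) (b := t)
        (by linarith [ht.2]) ht.1 (by ring)
      have : ℓ t = (1 - t) • x + t • y := by
        rw [hℓdef]; simp only [smul_sub, sub_smul, one_smul]; abel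
      rw [this]; exact hconv
    set φ : ℝ → ℝ := fun t => g (ℓ t) with hφdef
    set dφ : ℝ → ℝ := fun t => (fderivWithin ℝ g Q (ℓ t)) (y - x) with hdφdef
    have hφc : ContinuousOn φ (Icc 0 1) := hgc.comp hℓcont.continuousOn hmem
    have hφd : ∀ t ∈ Icc (0:ℝ) 1, HasDerivWithinAt φ (dφ t) (Icc 0 1) t := by
      intro t ht
      have hgd : HasFDerivWithinAt g (fderivWithin ℝ g Q (ℓ t)) Q (ℓ t) :=
        (hg.differentiableOn one_ne_zero (ℓ t) (hmem t ht)).hasFDerivWithinAt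
      have hld : HasDerivWithinAt ℓ (y - x) (Icc 0 1) t := by
        have : HasDerivAt ℓ (y - x) t := by
          have h1 : HasDerivAt (fun s : ℝ => s • (y - x)) ((1:ℝ) • (y - x)) t :=
            (hasDerivAt_id t).smul_const (y - x)
          simpa [one_smul, hℓdef] using h1.const_add x
        exact this.hasDerivWithinAt
      exact hgd.comp_hasDerivWithinAt t hld hmem
    have hdc : ContinuousOn dφ (Icc 0 1) :=
      (hDc.comp hℓcont.continuousOn hmem).clm_apply continuousOn_const
    have hφ0 : φ 0 ≤ 0 := by
      have : ℓ 0 = x := by rw [hℓdef]; simp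
      rw [hφdef]; simpa [this] using hx.2
    have hφ1 : 1 ≤ φ 1 := by
      have : ℓ 1 = y := by rw [hℓdef]; simp
      rw [hφdef]; simpa [this] using hy.2
    obtain ⟨a, b, ha0, hab, hb1, hmid, hintab⟩ := crossing_lemma hφc hφd hdc hφ0 hφ1
    have hsubI : Ioo a b ⊆ Icc (0:ℝ) 1 :=
      fun t ht => ⟨le_trans ha0 ht.1.le, le_trans ht.2.le hb1⟩
    have hptC : ∀ t ∈ Ioo a b, ℓ t ∈ C :=
      fun t ht => ⟨hmem t (hsubI ht), hmid t ht⟩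
    have hpt : ∀ t ∈ Ioo a b, |dφ t| ≤ (2*r) * F (ℓ t) := by
      intro t ht
      have h1 : F (ℓ t) = ‖fderivWithin ℝ g Q (ℓ t)‖ := by
        rw [hFdef, indicator_of_mem (hptC t ht)]
        exact hH _ (hmem t (hsubI ht))
      calc |dφ t| = ‖(fderivWithin ℝ g Q (ℓ t)) (y - x)‖ := (Real.norm_eq_abs _).symm
        _ ≤ ‖fderivWithin ℝ g Q (ℓ t)‖ * ‖y - x‖ := ContinuousLinearMap.le_opNorm _ _
        _ ≤ ‖fderivWithin ℝ g Q (ℓ t)‖ * (2*r) :=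
            mul_le_mul_of_nonneg_left (hyx x hxQ y hyQ) (norm_nonneg _)
        _ = (2*r) * F (ℓ t) := by rw [h1]; ring
    have hFℓmeas : Measurable (fun t => F (ℓ t)) := hFmeas.comp hℓcont.measurable
    have hIntBig : IntegrableOn (fun t => (2*r) * F (ℓ t)) (Ioo (0:ℝ) 1) volume := by
      apply Measure.integrableOn_of_bounded (M := 2*r*M')
      · rw [Real.volume_Ioo]; exact ENNReal.ofReal_ne_top
      · exact ((measurable_const.mul hFℓmeas).aestronglyMeasurable)
      · apply ae_of_all
        intro t
        rw [Real.norm_eq_abs, abs_of_nonneg (mul_nonneg (by positivity) (hFnn _))]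
        have := hFM (ℓ t)
        nlinarith [hFnn (ℓ t)]
    have hIntAbs : IntegrableOn (fun t => |dφ t|) (Ioo a b) volume := by
      have : ContinuousOn (fun t => |dφ t|) (Icc a b) :=
        (hdc.mono (Icc_subset_Icc ha0 hb1)).abs
      exact (this.integrableOn_Icc).mono_set Ioo_subset_Icc_self
    have h2 : (1:ℝ) ≤ ∫ t in Ioo a b, (2*r) * F (ℓ t) := by
      refine le_trans hintab ?_
      exact setIntegral_mono_on hIntAbs
        (hIntBig.mono_set (Ioo_subset_Ioo ha0 hb1)) measurableSet_Ioo hpt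
    have h3 : (1:ℝ) ≤ ∫ t in Ioo (0:ℝ) 1, (2*r) * F (ℓ t) := by
      refine le_trans h2 ?_
      apply setIntegral_mono_set hIntBig
      · apply ae_of_all; intro t; exact mul_nonneg (by positivity) (hFnn _)
      · exact (Ioo_subset_Ioo ha0 hb1).eventuallyLE
    rw [MeasureTheory.integral_const_mul] at h3
    set L : ℝ≥0∞ := ∫⁻ t in Ioo (0:ℝ) 1, eF (ℓ t) with hLdef
    have h5 : (∫ t in Ioo (0:ℝ) 1, F (ℓ t)) = L.toReal := by
      rw [integral_eq_lintegral_of_nonneg_ae (ae_of_all _ fun t => hFnn (ℓ t))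
        hFℓmeas.aestronglyMeasurable]
    rw [h5] at h3
    have h2rpos : (0:ℝ) < 2*r := by linarith
    have h6 : (2*r)⁻¹ ≤ L.toReal := by
      have hLnn : 0 ≤ L.toReal := ENNReal.toReal_nonneg
      calc (2*r)⁻¹ = (2*r)⁻¹ * 1 := (mul_one _).symm
        _ ≤ (2*r)⁻¹ * (2*r * L.toReal) := by
            apply mul_le_mul_of_nonneg_left h3 (by positivity)
        _ = L.toReal := by field_simp
    calc ENNReal.ofReal ((2*r)⁻¹) ≤ ENNReal.ofReal L.toReal :=
          ENNReal.ofReal_le_ofReal h6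
      _ ≤ L := ENNReal.ofReal_toReal_le
  -- Fubini-Tonelli and rescaling
  have hmeas3 : Measurable fun p : (((Fin n → ℝ) × ℝ) × ℝ) × ((Fin n → ℝ) × ℝ) =>
      eF (p.1.1 + p.1.2 • (p.2 - p.1.1)) := by
    apply heFmeas.comp
    fun_prop
  have step_t : ∀ t ∈ Ioo (0:ℝ) 1,
      (∫⁻ x in A, ∫⁻ y in B, eF (x + t • (y - x))) ≤ volume Q * (2^(n+1) * J) := by
    intro t ht
    rcases le_or_gt ((1:ℝ)/2) t with hta | hta
    · have hxb : ∀ x : ((Fin n → ℝ) × ℝ),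
          (∫⁻ y in B, eF (x + t • (y - x))) ≤ 2^(n+1) * J := by
        intro x
        have hrw : ∀ y : ((Fin n → ℝ) × ℝ), x + t • (y - x) = t • y + (x - t • x) := by
          intro y; rw [smul_sub]; abel
        simp_rw [hrw]
        exact scaled_lintegral_le eF hta (x - t • x) hBmeas
      calc (∫⁻ x in A, ∫⁻ y in B, eF (x + t • (y - x)))
          ≤ ∫⁻ _ in A, 2^(n+1) * J := setLIntegral_mono' hAmeas (fun x _ => hxb x)
        _ = (2^(n+1) * J) * volume A := setLIntegral_const _ _
        _ ≤ (2^(n+1) * J) * volume Q := mul_le_mul_right (measure_mono hAsub) _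
        _ = volume Q * (2^(n+1) * J) := mul_comm _ _
    · have hswap : (∫⁻ x in A, ∫⁻ y in B, eF (x + t • (y - x)))
          = ∫⁻ y in B, ∫⁻ x in A, eF (x + t • (y - x)) := by
        apply lintegral_lintegral_swap
        apply Measurable.aemeasurable
        apply heFmeas.comp
        fun_prop
      rw [hswap]
      have hyb : ∀ y : ((Fin n → ℝ) × ℝ),
          (∫⁻ x in A, eF (x + t • (y - x))) ≤ 2^(n+1) * J := by
        intro y
        have hrw : ∀ x : ((Fin n → ℝ) × ℝ), x + t • (y - x) = (1 - t) • x + t • y := by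
          intro x; rw [smul_sub, sub_smul, one_smul]; abel
        simp_rw [hrw]
        exact scaled_lintegral_le eF (by linarith [ht.2] : (1:ℝ)/2 ≤ 1 - t) (t • y) hAmeas
      calc (∫⁻ y in B, ∫⁻ x in A, eF (x + t • (y - x)))
          ≤ ∫⁻ _ in B, 2^(n+1) * J := setLIntegral_mono' hBmeas (fun y _ => hyb y)
        _ = (2^(n+1) * J) * volume B := setLIntegral_const _ _
        _ ≤ (2^(n+1) * J) * volume Q := mul_le_mul_right (measure_mono hBsub) _
        _ = volume Q * (2^(n+1) * J) := mul_comm _ _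
  have swap1 : ∀ x : ((Fin n → ℝ) × ℝ),
      (∫⁻ y in B, ∫⁻ t in Ioo (0:ℝ) 1, eF (x + t • (y - x)))
        = ∫⁻ t in Ioo (0:ℝ) 1, ∫⁻ y in B, eF (x + t • (y - x)) := by
    intro x
    apply lintegral_lintegral_swap
    apply Measurable.aemeasurable
    apply heFmeas.comp
    fun_prop
  have swap2 : (∫⁻ x in A, ∫⁻ t in Ioo (0:ℝ) 1, ∫⁻ y in B, eF (x + t • (y - x)))
      = ∫⁻ t in Ioo (0:ℝ) 1, ∫⁻ x in A, ∫⁻ y in B, eF (x + t • (y - x)) := by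
    apply lintegral_lintegral_swap
    apply Measurable.aemeasurable
    exact Measurable.lintegral_prod_right hmeas3
  have hchain : ENNReal.ofReal ((2*r)⁻¹) * volume B * volume A
      ≤ volume Q * (2^(n+1) * J) := by
    have c1 : ∀ x ∈ A, ENNReal.ofReal ((2*r)⁻¹) * volume B
        ≤ ∫⁻ y in B, ∫⁻ t in Ioo (0:ℝ) 1, eF (x + t • (y - x)) := by
      intro x hx
      calc ENNReal.ofReal ((2*r)⁻¹) * volume B
          = ∫⁻ _ in B, ENNReal.ofReal ((2*r)⁻¹) := (setLIntegral_const _ _).symm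
        _ ≤ _ := setLIntegral_mono' hBmeas (fun y hy => key x hx y hy)
    calc ENNReal.ofReal ((2*r)⁻¹) * volume B * volume A
        = ∫⁻ _ in A, ENNReal.ofReal ((2*r)⁻¹) * volume B := (setLIntegral_const _ _).symm
      _ ≤ ∫⁻ x in A, ∫⁻ y in B, ∫⁻ t in Ioo (0:ℝ) 1, eF (x + t • (y - x)) :=
          setLIntegral_mono' hAmeas c1
      _ = ∫⁻ x in A, ∫⁻ t in Ioo (0:ℝ) 1, ∫⁻ y in B, eF (x + t • (y - x)) :=
          lintegral_congr (fun x => swap1 x)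
      _ = ∫⁻ t in Ioo (0:ℝ) 1, ∫⁻ x in A, ∫⁻ y in B, eF (x + t • (y - x)) := swap2
      _ ≤ ∫⁻ _ in Ioo (0:ℝ) 1, volume Q * (2^(n+1) * J) :=
          setLIntegral_mono' measurableSet_Ioo step_t
      _ = (volume Q * (2^(n+1) * J)) * volume (Ioo (0:ℝ) 1) := setLIntegral_const _ _
      _ = volume Q * (2^(n+1) * J) := by
          rw [Real.volume_Ioo]
          norm_num
  -- volume of the box
  have hvolQ : volume Q = ENNReal.ofReal (2*r) ^ n * ENNReal.ofReal h := by
    rw [hQdef]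
    show ((volume : Measure (Fin n → ℝ)).prod (volume : Measure ℝ)) _ = _
    rw [Qbox, Measure.prod_prod, volume_pi_pi, Real.volume_Icc]
    congr 1
    · rw [Finset.prod_const]
      congr 2
      · congr 1; ring
      · simp
    · rw [Real.volume_Icc]; congr 1; ring
  -- final ENNReal computation
  have hK : ENNReal.ofReal (2*r) * ENNReal.ofReal ((2*r)⁻¹) = 1 := by
    rw [← ENNReal.ofReal_mul (by positivity), mul_inv_cancel₀ (by positivity),
      ENNReal.ofReal_one]
  have hconstbound : ENNReal.ofReal (2*r) * volume Q * 2^(n+1)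
      ≤ ENNReal.ofReal (4^(n+2) * r^(n+2)) := by
    rw [hvolQ]
    have h2p : (2:ℝ≥0∞)^(n+1) = ENNReal.ofReal ((2:ℝ)^(n+1)) := by
      rw [ENNReal.ofReal_pow (by norm_num)]
      norm_num
    rw [h2p, ← ENNReal.ofReal_pow (by positivity)]
    rw [← ENNReal.ofReal_mul (by positivity), ← ENNReal.ofReal_mul (by positivity),
      ← ENNReal.ofReal_mul (by positivity)]
    apply ENNReal.ofReal_le_ofReal
    calc _ = (2:ℝ)^(2*n+2) * (r^(n+1) * h) := by ring
      _ ≤ (2:ℝ)^(2*n+2) * (r^(n+1) * r) := by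
          apply mul_le_mul_of_nonneg_left _ (by positivity)
          apply mul_le_mul_of_nonneg_left hhr (by positivity)
      _ = (2:ℝ)^(2*n+2) * r^(n+2) := by ring
      _ ≤ (2:ℝ)^(2*n+4) * r^(n+2) := by
          apply mul_le_mul_of_nonneg_right _ (by positivity)
          apply pow_le_pow_right₀ (by norm_num)
          omega
      _ = 4^(n+2) * r^(n+2) := by
          rw [show (4:ℝ) = 2^2 by norm_num, ← pow_mul, show 2*(n+2) = 2*n+4 by omega]
  have hfinal : volume A * volume B ≤ ENNReal.ofReal (4^(n+2) * r^(n+2)) * J := by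
    calc volume A * volume B
        = (ENNReal.ofReal (2*r) * ENNReal.ofReal ((2*r)⁻¹)) * (volume B * volume A) := by
          rw [hK, one_mul, mul_comm]
      _ = ENNReal.ofReal (2*r) * (ENNReal.ofReal ((2*r)⁻¹) * volume B * volume A) := by
          ring
      _ ≤ ENNReal.ofReal (2*r) * (volume Q * (2^(n+1) * J)) := mul_le_mul_right hchain _
      _ = (ENNReal.ofReal (2*r) * volume Q * 2^(n+1)) * J := by ring
      _ ≤ ENNReal.ofReal (4^(n+2) * r^(n+2)) * J := mul_le_mul_left hconstbound _
  -- pass to real numbers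
  have hRfin : ENNReal.ofReal (4^(n+2) * r^(n+2)) * J ≠ ∞ :=
    ENNReal.mul_ne_top ENNReal.ofReal_ne_top hJfin
  have htofin := ENNReal.toReal_mono hRfin hfinal
  rw [ENNReal.toReal_mul, ENNReal.toReal_mul,
    ENNReal.toReal_ofReal (by positivity)] at htofin
  have hJval : J.toReal = ∫ q in C, ‖fderivWithin ℝ g Q q‖ := by
    have h1 : J = ∫⁻ q in C, ENNReal.ofReal ‖fderivWithin ℝ g Q q‖ := by
      rw [hJdef]
      have hind : ∀ z, eF z
          = C.indicator (fun q => ENNReal.ofReal ‖fderivWithin ℝ g Q q‖) z := by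
        intro z
        by_cases hz : z ∈ C
        · rw [heFdef]
          simp only
          rw [hFdef, indicator_of_mem hz, indicator_of_mem hz, hH z (hCsub hz)]
        · rw [heFdef]
          simp only
          rw [hFdef, indicator_of_notMem hz, indicator_of_notMem hz, ENNReal.ofReal_zero]
      rw [lintegral_congr hind, lintegral_indicator hCmeas]
    rw [h1]
    rw [integral_eq_lintegral_of_nonneg_ae (ae_of_all _ fun q => norm_nonneg _) ?_]
    exact H.continuous.aestronglyMeasurable.congr
      ((ae_restrict_iff' hCmeas).mpr (ae_of_all _ fun q hq => hH q (hCsub hq)))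
  rw [hJval] at htofin
  exact htofin
end

section
/- Let n ≥ 1 be an integer, b ∈ [0,1), p₁ > 2(1+b)/(1−b), R > 0 and Z > 0. Set B := [−R,R]ⁿ and D := B × [0,Z]. Then there is a constant C₀ depending only on n, b, p₁, R and Z such that for every continuously differentiable f : D → ℝ satisfying f(x,Z) = 0 for all x ∈ B, one has ∫_B f(x,0)² dx ≤ C₀ · (∫∫_D z^b |f(x,z)|^{p₁} dx dz)^{1/p₁} · (∫∫_D z^b (∂_z f(x,z))² dx dz)^{1/2}. -/
open MeasureTheory Set
open scoped ENNReal

/-- The cube `B = [-R,R]^n ⊆ ℝⁿ`. -/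
def Bbox (n : ℕ) (R : ℝ) : Set (Fin n → ℝ) :=
  Set.univ.pi fun _ : Fin n => Set.Icc (-R) R

/-- The box `D = B × [0,Z] ⊆ ℝⁿ × ℝ₊`. -/
def Dbox (n : ℕ) (R Z : ℝ) : Set ((Fin n → ℝ) × ℝ) :=
  Bbox n R ×ˢ Set.Icc 0 Z

private lemma holder3 {α : Type*} [MeasurableSpace α] {μ : Measure α}
    {F₁ F₂ F₃ : α → ℝ≥0∞} (h₁ : AEMeasurable F₁ μ) (h₂ : AEMeasurable F₂ μ)
    (h₃ : AEMeasurable F₃ μ) {a b c : ℝ} (ha : 0 ≤ a) (hb : 0 ≤ b) (hc : 0 ≤ c)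
    (habc : a + b + c = 1) :
    ∫⁻ x, F₁ x ^ a * F₂ x ^ b * F₃ x ^ c ∂μ ≤
      (∫⁻ x, F₁ x ∂μ) ^ a * (∫⁻ x, F₂ x ∂μ) ^ b * (∫⁻ x, F₃ x ∂μ) ^ c := by
  have h := ENNReal.lintegral_prod_norm_pow_le (μ := μ) (Finset.univ : Finset (Fin 3))
    (f := ![F₁, F₂, F₃]) (p := ![a, b, c])
    (by intro i _; fin_cases i <;> assumption)
    (by simpa [Fin.sum_univ_three] using habc)
    (by intro i _; fin_cases i <;> assumption)
  simpa [Fin.prod_univ_three] using h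

set_option maxHeartbeats 2000000 in
/-- Weighted trace inequality (display (A.29)): for `C¹` functions `f` on `D`
vanishing on the top face `z = Z`,
`∫_B f(x,0)² dx ≤ C₀ (∫∫_D z^b |f|^{p₁})^{1/p₁} (∫∫_D z^b (∂_z f)²)^{1/2}`,
with `C₀` depending only on `n`, `b`, `p₁`, `R` and `Z`. -/
theorem weighted_trace_inequality (n : ℕ) (hn : 1 ≤ n) (b p₁ R Z : ℝ)
    (hb : b ∈ Set.Ico (0:ℝ) 1) (hp : 2 * (1 + b) / (1 - b) < p₁)
    (hR : 0 < R) (hZ : 0 < Z) :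
    ∃ C₀ : ℝ, 0 < C₀ ∧ ∀ f : (Fin n → ℝ) × ℝ → ℝ,
      ContDiffOn ℝ 1 f (Dbox n R Z) →
      (∀ x ∈ Bbox n R, f (x, Z) = 0) →
      ∫ x in Bbox n R, f (x, 0) ^ 2 ≤
        C₀ * (∫ q in Dbox n R Z, q.2 ^ b * |f q| ^ p₁) ^ (1 / p₁) *
          (∫ q in Dbox n R Z,
              q.2 ^ b * (fderivWithin ℝ f (Dbox n R Z) q ((0 : Fin n → ℝ), (1:ℝ))) ^ 2) ^
            (1/2 : ℝ) := by
  obtain ⟨hb0, hb1⟩ := hb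
  have h1b : (0:ℝ) < 1 - b := by linarith
  have hkey : 2 * (1 + b) < p₁ * (1 - b) := (div_lt_iff₀ h1b).1 hp
  have hp2 : 2 < p₁ := by nlinarith
  have hp0 : 0 < p₁ := by linarith
  -- exponents
  set q₁ : ℝ := (1/2 - 1/p₁)⁻¹ with hq₁def
  have hd : (0:ℝ) < 1/2 - 1/p₁ := by
    have : 1/p₁ < 1/2 := by
      rw [div_lt_div_iff₀ hp0 (by norm_num)]; linarith
    linarith
  have hq₁ : 0 < q₁ := inv_pos.2 hd
  have hq₁inv : 1/q₁ = 1/2 - 1/p₁ := by rw [hq₁def, one_div, inv_inv]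
  set e : ℝ := (1/2 + 1/p₁) * b * q₁ with hedef
  have he0 : 0 ≤ e := by positivity
  have he1 : e < 1 := by
    have h2 : (1/2 + 1/p₁) * b < 1/2 - 1/p₁ := by
      rw [div_add_div _ _ (by norm_num) hp0.ne', div_sub_div _ _ (by norm_num) hp0.ne']
      rw [div_mul_eq_mul_div, div_lt_div_iff₀ (by positivity) (by positivity)]
      nlinarith
    calc e = ((1/2 + 1/p₁) * b) * q₁ := rfl
    _ < (1/2 - 1/p₁) * q₁ := by
        apply mul_lt_mul_of_pos_right h2 hq₁
    _ = 1 := by rw [hq₁def]; exact mul_inv_cancel₀ hd.ne'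
  -- basic sets
  set B := Bbox n R with hBdef
  set D := Dbox n R Z with hDdef
  have hDeq : D = B ×ˢ Icc (0:ℝ) Z := rfl
  have hBmeas : MeasurableSet B := MeasurableSet.univ_pi fun _ => measurableSet_Icc
  have hDmeas : MeasurableSet D := hBmeas.prod measurableSet_Icc
  have hBcomp : IsCompact B := isCompact_univ_pi fun _ => isCompact_Icc
  have hDcomp : IsCompact D := hBcomp.prod isCompact_Icc
  have hUD : UniqueDiffOn ℝ D :=
    (UniqueDiffOn.univ_pi fun _ => uniqueDiffOn_Icc (by linarith)).prod
      (uniqueDiffOn_Icc hZ)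
  have hrestr : volume.restrict D = (volume.restrict B).prod (volume.restrict (Icc (0:ℝ) Z)) := by
    rw [hDeq, Measure.volume_eq_prod, Measure.prod_restrict]
  -- the weight integral I₃
  set F₃ : (Fin n → ℝ) × ℝ → ℝ≥0∞ := fun q => ENNReal.ofReal (q.2 ^ (-e)) with hF₃def
  have hF₃meas : Measurable F₃ := (measurable_snd.pow measurable_const).ennreal_ofReal
  set I₃ : ℝ≥0∞ := ∫⁻ q in D, F₃ q ∂volume with hI₃def
  have hwint : IntegrableOn (fun z : ℝ => z ^ (-e)) (Icc 0 Z) volume := by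
    have h1 : IntervalIntegrable (fun z : ℝ => z ^ (-e)) volume 0 Z :=
      intervalIntegral.intervalIntegrable_rpow' (by linarith)
    have h2 : IntegrableOn (fun z : ℝ => z ^ (-e)) (Ioc 0 Z) volume := by
      rw [intervalIntegrable_iff, uIoc_of_le hZ.le] at h1; exact h1
    exact h2.congr_set_ae (Ioc_ae_eq_Icc (α := ℝ)).symm
  have hI₃top : I₃ < ⊤ := by
    rw [hI₃def, hrestr, lintegral_prod _ hF₃meas.aemeasurable]
    have hinner : ∀ x : Fin n → ℝ, ∫⁻ z in Icc (0:ℝ) Z, ENNReal.ofReal (z ^ (-e)) =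
        ∫⁻ z in Icc (0:ℝ) Z, ENNReal.ofReal (z ^ (-e)) := fun _ => rfl
    have hc : (∫⁻ z in Icc (0:ℝ) Z, ENNReal.ofReal (z ^ (-e))) < ⊤ := hwint.lintegral_lt_top
    calc ∫⁻ x in B, ∫⁻ z in Icc (0:ℝ) Z, F₃ (x, z) ∂volume ∂volume
        = ∫⁻ _ in B, (∫⁻ z in Icc (0:ℝ) Z, ENNReal.ofReal (z ^ (-e))) ∂volume := rfl
      _ = (∫⁻ z in Icc (0:ℝ) Z, ENNReal.ofReal (z ^ (-e))) * volume B := by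
          rw [setLIntegral_const]
      _ < ⊤ := ENNReal.mul_lt_top hc hBcomp.measure_lt_top
  -- the constant
  refine ⟨2 * I₃.toReal ^ (1/q₁) + 1, by positivity, ?_⟩
  intro f hf hftop
  set gz : (Fin n → ℝ) × ℝ → ℝ := fun q => fderivWithin ℝ f D q ((0 : Fin n → ℝ), (1:ℝ))
    with hgzdef
  have hdf : DifferentiableOn ℝ f D := hf.differentiableOn one_ne_zero
  have hfc : ContinuousOn f D := hf.continuousOn
  have hgzc : ContinuousOn gz D :=
    (hf.continuousOn_fderivWithin hUD le_rfl).clm_apply continuousOn_const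
  set G : (Fin n → ℝ) × ℝ → ℝ := fun q => |f q| * |gz q| with hGdef
  have hGc : ContinuousOn G D := hfc.abs.mul hgzc.abs
  have hGint : IntegrableOn G D volume := hGc.integrableOn_compact hDcomp
  -- pointwise FTC bound
  have key1 : ∀ x ∈ B, f (x, 0) ^ 2 ≤ 2 * ∫ z in Icc (0:ℝ) Z, G (x, z) := by
    intro x hx
    have hmaps : MapsTo (fun z : ℝ => ((x, z) : (Fin n → ℝ) × ℝ)) (Icc 0 Z) D :=
      fun z hz => ⟨hx, hz⟩
    have hι : ∀ z : ℝ, HasDerivAt (fun z : ℝ => ((x, z) : (Fin n → ℝ) × ℝ))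
        ((0 : Fin n → ℝ), (1:ℝ)) z := fun z => (hasDerivAt_const z x).prodMk (hasDerivAt_id z)
    have hφ : ∀ z ∈ Icc (0:ℝ) Z, HasDerivWithinAt (fun z => f (x, z)) (gz (x, z)) (Icc 0 Z) z := by
      intro z hz
      exact ((hdf (x, z) (hmaps hz)).hasFDerivWithinAt).comp_hasDerivWithinAt z
        ((hι z).hasDerivWithinAt) hmaps
    have hψ : ∀ z ∈ Icc (0:ℝ) Z,
        HasDerivWithinAt (fun z => f (x, z) ^ 2) (2 * f (x, z) * gz (x, z)) (Icc 0 Z) z := by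
      intro z hz
      have := (hφ z hz).fun_pow 2
      simpa [pow_one] using this
    have hφc : ContinuousOn (fun z => f (x, z)) (Icc 0 Z) :=
      hfc.comp ((continuous_const.prodMk continuous_id).continuousOn) hmaps
    have hgzc' : ContinuousOn (fun z => gz (x, z)) (Icc 0 Z) :=
      hgzc.comp ((continuous_const.prodMk continuous_id).continuousOn) hmaps
    have hψ'c : ContinuousOn (fun z => 2 * f (x, z) * gz (x, z)) (Icc 0 Z) :=
      (continuousOn_const.mul hφc).mul hgzc'
    have hψ'int : IntervalIntegrable (fun z => 2 * f (x, z) * gz (x, z)) volume 0 Z := by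
      apply ContinuousOn.intervalIntegrable
      rwa [uIcc_of_le hZ.le]
    have hftc : (∫ z in (0:ℝ)..Z, 2 * f (x, z) * gz (x, z)) = f (x, Z) ^ 2 - f (x, 0) ^ 2 := by
      apply intervalIntegral.integral_eq_sub_of_hasDeriv_right_of_le hZ.le (hφc.pow 2)
        ?_ hψ'int
      intro z hz
      have h1 := hψ z (Ioo_subset_Icc_self hz)
      exact (h1.hasDerivAt (Icc_mem_nhds hz.1 hz.2)).hasDerivWithinAt
    have hzero : f (x, Z) = 0 := hftop x hx
    have hGint' : IntervalIntegrable (fun z => 2 * G (x, z)) volume 0 Z := by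
      apply ContinuousOn.intervalIntegrable
      rw [uIcc_of_le hZ.le]
      exact continuousOn_const.mul (hGc.comp ((continuous_const.prodMk
        continuous_id).continuousOn) hmaps)
    have hmono : (∫ z in (0:ℝ)..Z, -(2 * f (x, z) * gz (x, z)))
        ≤ ∫ z in (0:ℝ)..Z, 2 * G (x, z) := by
      apply intervalIntegral.integral_mono_on hZ.le hψ'int.neg hGint'
      intro z hz
      have : |2 * f (x, z) * gz (x, z)| = 2 * G (x, z) := by
        rw [hGdef]; simp [abs_mul, mul_assoc]
      calc -(2 * f (x, z) * gz (x, z)) ≤ |2 * f (x, z) * gz (x, z)| := neg_le_abs _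
      _ = 2 * G (x, z) := this
    have heq : f (x, 0) ^ 2 = ∫ z in (0:ℝ)..Z, -(2 * f (x, z) * gz (x, z)) := by
      rw [intervalIntegral.integral_neg, hftc, hzero]; ring
    calc f (x, 0) ^ 2 ≤ ∫ z in (0:ℝ)..Z, 2 * G (x, z) := heq ▸ hmono
      _ = ∫ z in Ioc (0:ℝ) Z, 2 * G (x, z) := intervalIntegral.integral_of_le hZ.le
      _ = ∫ z in Icc (0:ℝ) Z, 2 * G (x, z) :=
          (setIntegral_congr_set (Ioc_ae_eq_Icc (α := ℝ)))
      _ = 2 * ∫ z in Icc (0:ℝ) Z, G (x, z) := MeasureTheory.integral_const_mul _ _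
  -- integrate over B
  have hGprod : Integrable (fun q : (Fin n → ℝ) × ℝ => G q)
      ((volume.restrict B).prod (volume.restrict (Icc (0:ℝ) Z))) := by
    rw [← hrestr]; exact hGint
  have hLHSint : IntegrableOn (fun x => f (x, 0) ^ 2) B volume := by
    apply ContinuousOn.integrableOn_compact hBcomp
    exact ((hfc.comp ((continuous_id.prodMk continuous_const).continuousOn)
      (fun x hx => ⟨hx, ⟨le_rfl, hZ.le⟩⟩)).pow 2)
  have hRHSint : IntegrableOn (fun x => 2 * ∫ z in Icc (0:ℝ) Z, G (x, z)) B volume :=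
    (hGprod.integral_prod_left).const_mul 2
  have step2 : (∫ x in B, f (x, 0) ^ 2) ≤ 2 * ∫ q in D, G q := by
    calc (∫ x in B, f (x, 0) ^ 2) ≤ ∫ x in B, 2 * ∫ z in Icc (0:ℝ) Z, G (x, z) :=
          setIntegral_mono_on hLHSint hRHSint hBmeas key1
      _ = 2 * ∫ x in B, ∫ z in Icc (0:ℝ) Z, G (x, z) := MeasureTheory.integral_const_mul _ _
      _ = 2 * ∫ q in D, G q := by
          rw [hrestr, ← MeasureTheory.integral_prod _ hGprod]
  -- Hölder step (in ℝ≥0∞)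
  set μD := volume.restrict D with hμDdef
  set A : ℝ := ∫ q in D, q.2 ^ b * |f q| ^ p₁ with hAdef
  set E : ℝ := ∫ q in D, q.2 ^ b * gz q ^ 2 with hEdef
  have hmemD : ∀ q : (Fin n → ℝ) × ℝ, q ∈ D → 0 ≤ q.2 ∧ q.2 ≤ Z := fun q hq =>
    ⟨hq.2.1, hq.2.2⟩
  have hAintc : ContinuousOn (fun q : (Fin n → ℝ) × ℝ => q.2 ^ b * |f q| ^ p₁) D := by
    apply ContinuousOn.mul
    · exact ((Real.continuous_rpow_const hb0).comp continuous_snd).continuousOn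
    · exact hfc.abs.rpow_const (fun q _ => Or.inr hp0.le)
  have hEintc : ContinuousOn (fun q : (Fin n → ℝ) × ℝ => q.2 ^ b * gz q ^ 2) D :=
    (((Real.continuous_rpow_const hb0).comp continuous_snd).continuousOn).mul (hgzc.pow 2)
  have hAint : IntegrableOn (fun q : (Fin n → ℝ) × ℝ => q.2 ^ b * |f q| ^ p₁) D volume :=
    hAintc.integrableOn_compact hDcomp
  have hEint : IntegrableOn (fun q : (Fin n → ℝ) × ℝ => q.2 ^ b * gz q ^ 2) D volume :=
    hEintc.integrableOn_compact hDcomp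
  have hAnn : 0 ≤ᵐ[μD] fun q : (Fin n → ℝ) × ℝ => q.2 ^ b * |f q| ^ p₁ := by
    filter_upwards [ae_restrict_mem hDmeas] with q hq
    exact mul_nonneg (Real.rpow_nonneg (hmemD q hq).1 _) (Real.rpow_nonneg (abs_nonneg _) _)
  have hEnn : 0 ≤ᵐ[μD] fun q : (Fin n → ℝ) × ℝ => q.2 ^ b * gz q ^ 2 := by
    filter_upwards [ae_restrict_mem hDmeas] with q hq
    exact mul_nonneg (Real.rpow_nonneg (hmemD q hq).1 _) (sq_nonneg _)
  have hGnn : 0 ≤ᵐ[μD] G := by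
    filter_upwards with q
    exact mul_nonneg (abs_nonneg _) (abs_nonneg _)
  have hA0 : 0 ≤ A := by
    rw [hAdef]; exact integral_nonneg_of_ae hAnn
  have hE0 : 0 ≤ E := by
    rw [hEdef]; exact integral_nonneg_of_ae hEnn
  -- the three ENNReal functions
  set F₁ : (Fin n → ℝ) × ℝ → ℝ≥0∞ := fun q => ENNReal.ofReal (q.2 ^ b * |f q| ^ p₁) with hF₁def
  set F₂ : (Fin n → ℝ) × ℝ → ℝ≥0∞ := fun q => ENNReal.ofReal (q.2 ^ b * gz q ^ 2) with hF₂def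
  have hF₁m : AEMeasurable F₁ μD := (hAintc.aemeasurable hDmeas).ennreal_ofReal
  have hF₂m : AEMeasurable F₂ μD := (hEintc.aemeasurable hDmeas).ennreal_ofReal
  -- pointwise Hölder decomposition
  have hae0 : ∀ᵐ q : (Fin n → ℝ) × ℝ ∂μD, q.2 ≠ 0 := by
    rw [hμDdef]
    apply ae_restrict_of_ae
    have : volume {q : (Fin n → ℝ) × ℝ | q.2 = 0} = 0 := by
      have : {q : (Fin n → ℝ) × ℝ | q.2 = 0} = (univ : Set (Fin n → ℝ)) ×ˢ ({0} : Set ℝ) := by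
        ext q; simp [Set.mem_prod, Prod.ext_iff, eq_comm]
      rw [this, Measure.volume_eq_prod, Measure.prod_prod]
      simp
    rw [ae_iff]
    simpa using this
  have hptws : ∀ᵐ q : (Fin n → ℝ) × ℝ ∂μD,
      ENNReal.ofReal (G q) ≤ F₁ q ^ (1/p₁) * F₂ q ^ (1/2 : ℝ) * F₃ q ^ (1/q₁) := by
    filter_upwards [ae_restrict_mem hDmeas, hae0] with q hq hz0
    have hz : 0 < q.2 := lt_of_le_of_ne (hmemD q hq).1 (Ne.symm hz0)
    -- real identity
    have hreal : (q.2 ^ b * |f q| ^ p₁) ^ (1/p₁) * (q.2 ^ b * gz q ^ 2) ^ (1/2 : ℝ)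
        * (q.2 ^ (-e)) ^ (1/q₁) = G q := by
      rw [Real.mul_rpow (Real.rpow_nonneg hz.le _) (Real.rpow_nonneg (abs_nonneg _) _),
        Real.mul_rpow (Real.rpow_nonneg hz.le _) (sq_nonneg _)]
      have h1 : (|f q| ^ p₁) ^ (1/p₁) = |f q| := by
        rw [← Real.rpow_mul (abs_nonneg _), mul_one_div_cancel hp0.ne', Real.rpow_one]
      have h2 : ((gz q) ^ 2) ^ (1/2 : ℝ) = |gz q| := by
        rw [← sq_abs, ← Real.rpow_natCast |gz q| 2, ← Real.rpow_mul (abs_nonneg _)]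
        norm_num
      have h3 : (q.2 ^ b) ^ (1/p₁) = q.2 ^ (b * (1/p₁)) := (Real.rpow_mul hz.le _ _).symm
      have h4 : (q.2 ^ b) ^ (1/2 : ℝ) = q.2 ^ (b * (1/2 : ℝ)) := (Real.rpow_mul hz.le _ _).symm
      have h5 : (q.2 ^ (-e)) ^ (1/q₁) = q.2 ^ (-e * (1/q₁)) := (Real.rpow_mul hz.le _ _).symm
      rw [h1, h2, h3, h4, h5]
      have h6 : q.2 ^ (b * (1/p₁)) * q.2 ^ (b * (1/2 : ℝ)) * q.2 ^ (-e * (1/q₁))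
          = q.2 ^ (b * (1/p₁) + b * (1/2 : ℝ) + -e * (1/q₁)) := by
        rw [← Real.rpow_add hz, ← Real.rpow_add hz]
      have h7 : b * (1/p₁) + b * (1/2 : ℝ) + -e * (1/q₁) = 0 := by
        have : e * (1/q₁) = (1/2 + 1/p₁) * b := by
          rw [hedef, mul_one_div, mul_div_assoc, div_self hq₁.ne', mul_one]
        linarith [this]
      calc q.2 ^ (b * (1/p₁)) * |f q| * (q.2 ^ (b * (1/2:ℝ)) * |gz q|) * q.2 ^ (-e * (1/q₁))
          = (q.2 ^ (b * (1/p₁)) * q.2 ^ (b * (1/2:ℝ)) * q.2 ^ (-e * (1/q₁)))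
            * (|f q| * |gz q|) := by ring
        _ = q.2 ^ (0:ℝ) * (|f q| * |gz q|) := by rw [h6, h7]
        _ = G q := by rw [Real.rpow_zero, one_mul]
    have hofr : F₁ q ^ (1/p₁) * F₂ q ^ (1/2 : ℝ) * F₃ q ^ (1/q₁)
        = ENNReal.ofReal ((q.2 ^ b * |f q| ^ p₁) ^ (1/p₁) * (q.2 ^ b * gz q ^ 2) ^ (1/2 : ℝ)
          * (q.2 ^ (-e)) ^ (1/q₁)) := by
      simp only [hF₁def, hF₂def, hF₃def]
      rw [ENNReal.ofReal_rpow_of_nonneg (mul_nonneg (Real.rpow_nonneg hz.le _)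
          (Real.rpow_nonneg (abs_nonneg _) _)) (by positivity),
        ENNReal.ofReal_rpow_of_nonneg (mul_nonneg (Real.rpow_nonneg hz.le _)
          (sq_nonneg _)) (by norm_num),
        ENNReal.ofReal_rpow_of_nonneg (Real.rpow_nonneg hz.le _) (by positivity),
        ← ENNReal.ofReal_mul (by positivity), ← ENNReal.ofReal_mul (by positivity)]
    rw [hofr, hreal]
  -- Hölder
  have hsum : (1/p₁) + (1/2 : ℝ) + (1/q₁) = 1 := by rw [hq₁inv]; ring
  have holder : (∫⁻ q, ENNReal.ofReal (G q) ∂μD)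
      ≤ (∫⁻ q, F₁ q ∂μD) ^ (1/p₁) * (∫⁻ q, F₂ q ∂μD) ^ (1/2 : ℝ)
        * (∫⁻ q, F₃ q ∂μD) ^ (1/q₁) := by
    have h := holder3 (μ := μD) hF₁m hF₂m hF₃meas.aemeasurable
      (by positivity : (0:ℝ) ≤ 1/p₁) (by norm_num : (0:ℝ) ≤ (1/2:ℝ))
      (by positivity : (0:ℝ) ≤ 1/q₁) hsum
    calc (∫⁻ q, ENNReal.ofReal (G q) ∂μD)
        ≤ ∫⁻ q, F₁ q ^ (1/p₁) * F₂ q ^ (1/2 : ℝ) * F₃ q ^ (1/q₁) ∂μD := lintegral_mono_ae hptws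
      _ ≤ _ := h
  -- identify lintegrals
  have hAeq : (∫⁻ q, F₁ q ∂μD) = ENNReal.ofReal A := by
    rw [hAdef, ofReal_integral_eq_lintegral_ofReal hAint hAnn]
  have hEeq : (∫⁻ q, F₂ q ∂μD) = ENNReal.ofReal E := by
    rw [hEdef, ofReal_integral_eq_lintegral_ofReal hEint hEnn]
  have hGeq : ENNReal.ofReal (∫ q in D, G q) = ∫⁻ q, ENNReal.ofReal (G q) ∂μD :=
    ofReal_integral_eq_lintegral_ofReal hGint hGnn
  -- final ENNReal chain
  have hchain : ENNReal.ofReal (∫ x in B, f (x, 0) ^ 2)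
      ≤ 2 * ((ENNReal.ofReal A) ^ (1/p₁) * (ENNReal.ofReal E) ^ (1/2 : ℝ) * I₃ ^ (1/q₁)) := by
    calc ENNReal.ofReal (∫ x in B, f (x, 0) ^ 2)
        ≤ ENNReal.ofReal (2 * ∫ q in D, G q) := ENNReal.ofReal_le_ofReal step2
      _ = 2 * ENNReal.ofReal (∫ q in D, G q) := by
          rw [ENNReal.ofReal_mul (by norm_num)]; norm_num
      _ = 2 * ∫⁻ q, ENNReal.ofReal (G q) ∂μD := by rw [hGeq]
      _ ≤ 2 * ((ENNReal.ofReal A) ^ (1/p₁) * (ENNReal.ofReal E) ^ (1/2 : ℝ) * I₃ ^ (1/q₁)) := by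
          apply mul_le_mul_right 
          rw [← hAeq, ← hEeq]
          exact holder
  -- convert back to reals
  have hL0 : 0 ≤ ∫ x in B, f (x, 0) ^ 2 := integral_nonneg fun x => sq_nonneg _
  have hRne : (2 : ℝ≥0∞) * ((ENNReal.ofReal A) ^ (1/p₁) * (ENNReal.ofReal E) ^ (1/2 : ℝ)
      * I₃ ^ (1/q₁)) ≠ ⊤ := by
    apply ENNReal.mul_ne_top (by norm_num)
    apply ENNReal.mul_ne_top
    apply ENNReal.mul_ne_top
    · exact ENNReal.rpow_ne_top_of_nonneg (by positivity) ENNReal.ofReal_ne_top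
    · exact ENNReal.rpow_ne_top_of_nonneg (by norm_num) ENNReal.ofReal_ne_top
    · exact ENNReal.rpow_ne_top_of_nonneg (by positivity) hI₃top.ne
  have hfinal : (∫ x in B, f (x, 0) ^ 2)
      ≤ 2 * (A ^ (1/p₁) * E ^ (1/2 : ℝ) * I₃.toReal ^ (1/q₁)) := by
    have h := ENNReal.toReal_mono hRne hchain
    rw [ENNReal.toReal_ofReal hL0] at h
    refine h.trans (le_of_eq ?_)
    rw [ENNReal.toReal_mul, ENNReal.toReal_mul, ENNReal.toReal_mul,
      ← ENNReal.toReal_rpow, ← ENNReal.toReal_rpow, ← ENNReal.toReal_rpow,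
      ENNReal.toReal_ofReal hA0, ENNReal.toReal_ofReal hE0]
    norm_num
  calc (∫ x in B, f (x, 0) ^ 2)
      ≤ 2 * (A ^ (1/p₁) * E ^ (1/2 : ℝ) * I₃.toReal ^ (1/q₁)) := hfinal
    _ = (2 * I₃.toReal ^ (1/q₁)) * (A ^ (1/p₁) * E ^ (1/2 : ℝ)) := by ring
    _ ≤ (2 * I₃.toReal ^ (1/q₁) + 1) * (A ^ (1/p₁) * E ^ (1/2 : ℝ)) := by
        apply mul_le_mul_of_nonneg_right (by linarith)
        exact mul_nonneg (Real.rpow_nonneg hA0 _) (Real.rpow_nonneg hE0 _)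
    _ = (2 * I₃.toReal ^ (1/q₁) + 1) * A ^ (1/p₁) * E ^ (1/2 : ℝ) := by ring
end
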